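/- Let ρ(x) = 1 - x/L. If φ ∈ H²_loc(0,L) satisfies φ(0) = 0, φ'(0) = 0 makes sense via ρφ' ∈ L², and ρ²φ'' ∈ L²(0,L), ρφ' ∈ L²(0,L), φ ∈ L²(0,L), then ‖φ‖_{L²(0,L)} ≤ (4L²/3)·‖ρ²φ''‖_{L²(0,L)}. -/

import Mathlib

set_option maxHeartbeats 1000000

open Set MeasureTheory Filter

-- product of L² functions is integrable
lemma stmt9_sqmul {μ : Measure ℝ} {f g : ℝ → ℝ}
    (hfm : AEStronglyMeasurable f μ) (hgm : AEStronglyMeasurable g μ)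
    (hf : Integrable (fun x => f x ^ 2) μ) (hg : Integrable (fun x => g x ^ 2) μ) :
    Integrable (fun x => f x * g x) μ := by
  refine ((hf.add hg).div_const 2).mono' (hfm.mul hgm) (.of_forall fun x => ?_)
  simp only [Real.norm_eq_abs, abs_mul, Pi.add_apply]
  nlinarith [sq_nonneg (|f x| - |g x|), sq_abs (f x), sq_abs (g x), abs_nonneg (f x), abs_nonneg (g x)]

-- Cauchy–Schwarz
lemma stmt9_cs {μ : Measure ℝ} {f g : ℝ → ℝ}
    (hfm : AEStronglyMeasurable f μ) (hgm : AEStronglyMeasurable g μ)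
    (hf : Integrable (fun x => f x ^ 2) μ) (hg : Integrable (fun x => g x ^ 2) μ) :
    ∫ x, |f x * g x| ∂μ ≤
      Real.sqrt (∫ x, f x ^ 2 ∂μ) * Real.sqrt (∫ x, g x ^ 2 ∂μ) := by
  set A := Real.sqrt (∫ x, f x ^ 2 ∂μ) with hA
  set B := Real.sqrt (∫ x, g x ^ 2 ∂μ) with hB
  have hIf : (0:ℝ) ≤ ∫ x, f x ^ 2 ∂μ := integral_nonneg fun x => sq_nonneg _
  have hIg : (0:ℝ) ≤ ∫ x, g x ^ 2 ∂μ := integral_nonneg fun x => sq_nonneg _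
  have hA2 : A ^ 2 = ∫ x, f x ^ 2 ∂μ := Real.sq_sqrt hIf
  have hB2 : B ^ 2 = ∫ x, g x ^ 2 ∂μ := Real.sq_sqrt hIg
  have hA0 : 0 ≤ A := Real.sqrt_nonneg _
  have hB0 : 0 ≤ B := Real.sqrt_nonneg _
  have habs : Integrable (fun x => |f x * g x|) μ := (stmt9_sqmul hfm hgm hf hg).abs
  rcases eq_or_lt_of_le hA0 with hA' | hA'
  · have : ∫ x, f x ^ 2 ∂μ = 0 := by rw [← hA2, ← hA']; ring
    have hf0 : (fun x => f x ^ 2) =ᵐ[μ] 0 :=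
      (integral_eq_zero_iff_of_nonneg (fun x => sq_nonneg _) hf).mp this
    have : (fun x => |f x * g x|) =ᵐ[μ] 0 := by
      filter_upwards [hf0] with x hx
      have : f x = 0 := by simpa [pow_eq_zero_iff] using hx
      simp [this]
    rw [integral_congr_ae this]
    simp [mul_nonneg hA0 hB0]
  · set t := B / A with ht'
    rcases eq_or_lt_of_le hB0 with hB' | hB'
    · have : ∫ x, g x ^ 2 ∂μ = 0 := by rw [← hB2, ← hB']; ring
      have hg0 : (fun x => g x ^ 2) =ᵐ[μ] 0 :=
        (integral_eq_zero_iff_of_nonneg (fun x => sq_nonneg _) hg).mp this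
      have : (fun x => |f x * g x|) =ᵐ[μ] 0 := by
        filter_upwards [hg0] with x hx
        have : g x = 0 := by simpa [pow_eq_zero_iff] using hx
        simp [this]
      rw [integral_congr_ae this]
      simp [mul_nonneg hA0 hB0]
    · have htpos : 0 < t := div_pos hB' hA'
      have hpt : ∀ x, |f x * g x| ≤ (t * f x ^ 2 + g x ^ 2 / t) / 2 := by
        intro x
        rw [abs_mul]
        have h1 := sq_nonneg (t * |f x| - |g x|)
        have h2 : |f x| ^ 2 = f x ^ 2 := sq_abs _
        have h3 : |g x| ^ 2 = g x ^ 2 := sq_abs _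
        rw [le_div_iff₀ (by norm_num : (0:ℝ) < 2), ← mul_le_mul_iff_right₀ htpos]
        have h5 : t * (t * f x ^ 2 + g x ^ 2 / t) = t ^ 2 * f x ^ 2 + g x ^ 2 := by
          field_simp
        rw [h5]
        nlinarith [abs_nonneg (f x), abs_nonneg (g x)]
      have hRint : Integrable (fun x => (t * f x ^ 2 + g x ^ 2 / t) / 2) μ :=
        (((hf.const_mul t).add (hg.div_const t)).div_const 2)
      have hle : ∫ x, |f x * g x| ∂μ ≤ ∫ x, (t * f x ^ 2 + g x ^ 2 / t) / 2 ∂μ :=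
        integral_mono habs hRint hpt
      have hcalc : ∫ x, (t * f x ^ 2 + g x ^ 2 / t) / 2 ∂μ = A * B := by
        rw [show (fun x => (t * f x ^ 2 + g x ^ 2 / t) / 2)
              = fun x => (t * f x ^ 2 + (g x ^ 2) / t) / 2 from rfl]
        rw [integral_div, integral_add (hf.const_mul t) (hg.div_const t),
          integral_const_mul, integral_div, ← hA2, ← hB2, ht']
        field_simp
        ring
      linarith


lemma stmt9_ftc {a b : ℝ} (hab : a ≤ b) {F f : ℝ → ℝ}
    (hc : ContinuousOn F (Icc a b)) (hd : ∀ x ∈ Ioo a b, HasDerivAt F (f x) x)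
    (hi : IntegrableOn f (Ioc a b)) :
    ∫ x in Ioo a b, f x = F b - F a := by
  rw [← MeasureTheory.integral_Ioc_eq_integral_Ioo, ← intervalIntegral.integral_of_le hab]
  exact intervalIntegral.integral_eq_sub_of_hasDeriv_right_of_le hab hc
    (fun x hx => (hd x hx).hasDerivWithinAt)
    ((intervalIntegrable_iff_integrableOn_Ioc_of_le hab).mpr hi)

lemma stmt9_lim {L : ℝ} (hL : 0 < L) {f : ℝ → ℝ} (hfi : IntegrableOn f (Ioo 0 L))
    {M : ℝ} (h : ∀ b ∈ Ioo (0:ℝ) L, ∫ x in Ioo 0 b, f x ≤ M) :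
    ∫ x in Ioo (0:ℝ) L, f x ≤ M := by
  set u : ℕ → ℝ := fun n => L - L / (n + 2) with hu
  have hmem : ∀ n, u n ∈ Ioo (0:ℝ) L := by
    intro n
    have h1 : (0:ℝ) < (n:ℝ) + 2 := by positivity
    constructor
    · have : L / ((n:ℝ) + 2) ≤ L / 2 := by
        apply div_le_div_of_nonneg_left hL.le (by norm_num) (by linarith)
      simp only [hu]
      linarith
    · simp only [hu]
      have : 0 < L / ((n:ℝ) + 2) := div_pos hL h1
      linarith
  have hmono : Monotone fun n => Ioo (0:ℝ) (u n) := by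
    intro m n hmn
    apply Ioo_subset_Ioo_right
    simp only [hu]
    have h1 : (0:ℝ) < (m:ℝ) + 2 := by positivity
    have h2 : (m:ℝ) + 2 ≤ (n:ℝ) + 2 := by exact_mod_cast by omega
    have := div_le_div_of_nonneg_left hL.le h1 h2
    linarith
  have htend : Tendsto u atTop (nhds L) := by
    have h1 : Tendsto (fun n : ℕ => (n:ℝ) + 2) atTop atTop :=
      tendsto_atTop_add_const_right _ 2 tendsto_natCast_atTop_atTop
    have h2 : Tendsto (fun n : ℕ => L / ((n:ℝ) + 2)) atTop (nhds 0) :=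
      Tendsto.div_atTop tendsto_const_nhds h1
    have h3 : Tendsto (fun n : ℕ => L - L / ((n:ℝ) + 2)) atTop (nhds (L - 0)) :=
      Tendsto.sub tendsto_const_nhds h2
    simpa using h3
  have hUnion : (⋃ n, Ioo (0:ℝ) (u n)) = Ioo 0 L := by
    ext x
    simp only [mem_iUnion, mem_Ioo]
    constructor
    · rintro ⟨n, hx0, hxu⟩
      exact ⟨hx0, hxu.trans (hmem n).2⟩
    · rintro ⟨hx0, hxL⟩
      have : ∀ᶠ n in atTop, x < u n := htend.eventually (eventually_gt_nhds hxL)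
      obtain ⟨n, hn⟩ := this.exists
      exact ⟨n, hx0, hn⟩
  have hten := tendsto_setIntegral_of_monotone (fun n => measurableSet_Ioo) hmono
    (by rw [hUnion]; exact hfi)
  rw [hUnion] at hten
  exact le_of_tendsto hten (Eventually.of_forall fun n => h (u n) (hmem n))

theorem stmt9 (L : ℝ) (hL : 0 < L) (ρ : ℝ → ℝ) (hρ : ∀ x, ρ x = 1 - x / L)
    (φ φ' φ'' : ℝ → ℝ)
    (hcont : ContinuousOn φ (Ico 0 L))
    (hcont' : ContinuousOn φ' (Ico 0 L))
    (hderiv : ∀ x ∈ Ioo (0:ℝ) L, HasDerivAt φ (φ' x) x)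
    (hderiv' : ∀ x ∈ Ioo (0:ℝ) L, HasDerivAt φ' (φ'' x) x)
    (h0 : φ 0 = 0) (h0' : φ' 0 = 0)
    (hφL2 : IntegrableOn (fun x => (φ x) ^ 2) (Ioo 0 L))
    (hd1L2 : IntegrableOn (fun x => (ρ x * φ' x) ^ 2) (Ioo 0 L))
    (hd2L2 : IntegrableOn (fun x => ((ρ x) ^ 2 * φ'' x) ^ 2) (Ioo 0 L)) :
    Real.sqrt (∫ x in Ioo (0:ℝ) L, (φ x) ^ 2) ≤
      (4 * L ^ 2 / 3) * Real.sqrt (∫ x in Ioo (0:ℝ) L, ((ρ x) ^ 2 * φ'' x) ^ 2) := by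
  have hρe : ρ = fun x => 1 - x / L := funext hρ
  subst hρe
  have hLne : L ≠ 0 := hL.ne'
  set μL := volume.restrict (Ioo (0:ℝ) L) with hμL
  -- measurability
  have hIoIc : Ioo (0:ℝ) L ⊆ Ico 0 L := Ioo_subset_Ico_self
  have mφ : AEStronglyMeasurable φ μL :=
    (hcont.mono hIoIc).aestronglyMeasurable measurableSet_Ioo
  have mφ' : AEStronglyMeasurable φ' μL :=
    (hcont'.mono hIoIc).aestronglyMeasurable measurableSet_Ioo
  have mφ'' : AEStronglyMeasurable φ'' μL := by
    refine ((measurable_deriv φ').aestronglyMeasurable).congr ?_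
    refine (ae_restrict_iff' measurableSet_Ioo).mpr (Eventually.of_forall fun x hx => ?_)
    exact (hderiv' x hx).deriv
  have cρ : Continuous fun x : ℝ => 1 - x / L := by continuity
  have mg1 : AEStronglyMeasurable (fun x => (1 - x / L) * φ' x) μL :=
    (cρ.aestronglyMeasurable).mul mφ'
  have mg2 : AEStronglyMeasurable (fun x => (1 - x / L) ^ 2 * φ'' x) μL :=
    ((cρ.pow 2).aestronglyMeasurable).mul mφ''
  -- integrable products
  have P1 : IntegrableOn (fun x => φ x * ((1 - x / L) * φ' x)) (Ioo 0 L) :=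
    stmt9_sqmul mφ mg1 hφL2 hd1L2
  have P2 : IntegrableOn (fun x => ((1 - x / L) * φ' x) * ((1 - x / L) ^ 2 * φ'' x)) (Ioo 0 L) :=
    stmt9_sqmul mg1 mg2 hd1L2 hd2L2
  set A := Real.sqrt (∫ x in Ioo (0:ℝ) L, φ x ^ 2) with hA
  set B := Real.sqrt (∫ x in Ioo (0:ℝ) L, ((1 - x / L) * φ' x) ^ 2) with hB
  set C := Real.sqrt (∫ x in Ioo (0:ℝ) L, ((1 - x / L) ^ 2 * φ'' x) ^ 2) with hC
  have hA0 : 0 ≤ A := Real.sqrt_nonneg _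
  have hB0 : 0 ≤ B := Real.sqrt_nonneg _
  have hC0 : 0 ≤ C := Real.sqrt_nonneg _
  have hA2 : A ^ 2 = ∫ x in Ioo (0:ℝ) L, φ x ^ 2 :=
    Real.sq_sqrt (integral_nonneg fun x => sq_nonneg _)
  have hB2 : B ^ 2 = ∫ x in Ioo (0:ℝ) L, ((1 - x / L) * φ' x) ^ 2 :=
    Real.sq_sqrt (integral_nonneg fun x => sq_nonneg _)
  have cs1 : ∫ x in Ioo (0:ℝ) L, |φ x * ((1 - x / L) * φ' x)| ≤ A * B :=
    stmt9_cs mφ mg1 hφL2 hd1L2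
  have cs2 : ∫ x in Ioo (0:ℝ) L, |((1 - x / L) * φ' x) * ((1 - x / L) ^ 2 * φ'' x)| ≤ B * C :=
    stmt9_cs mg1 mg2 hd1L2 hd2L2
  -- bounds on subinterval integrals of the products
  have habs1 : ∀ b ∈ Ioo (0:ℝ) L,
      ∫ x in Ioo (0:ℝ) b, φ x * ((1 - x / L) * φ' x) ≤ A * B := by
    intro b hb
    have hsub : Ioo (0:ℝ) b ⊆ Ioo 0 L := Ioo_subset_Ioo_right hb.2.le
    calc ∫ x in Ioo (0:ℝ) b, φ x * ((1 - x / L) * φ' x)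
        ≤ ∫ x in Ioo (0:ℝ) b, |φ x * ((1 - x / L) * φ' x)| :=
          integral_mono (P1.mono_set hsub) (P1.mono_set hsub).abs fun x => le_abs_self _
      _ ≤ ∫ x in Ioo (0:ℝ) L, |φ x * ((1 - x / L) * φ' x)| := by
          apply setIntegral_mono_set P1.abs
            (Eventually.of_forall fun x => abs_nonneg _)
            (HasSubset.Subset.eventuallyLE hsub)
      _ ≤ A * B := cs1
  have habs2 : ∀ b ∈ Ioo (0:ℝ) L,
      ∫ x in Ioo (0:ℝ) b, ((1 - x / L) * φ' x) * ((1 - x / L) ^ 2 * φ'' x) ≤ B * C := by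
    intro b hb
    have hsub : Ioo (0:ℝ) b ⊆ Ioo 0 L := Ioo_subset_Ioo_right hb.2.le
    calc ∫ x in Ioo (0:ℝ) b, ((1 - x / L) * φ' x) * ((1 - x / L) ^ 2 * φ'' x)
        ≤ ∫ x in Ioo (0:ℝ) b, |((1 - x / L) * φ' x) * ((1 - x / L) ^ 2 * φ'' x)| :=
          integral_mono (P2.mono_set hsub) (P2.mono_set hsub).abs fun x => le_abs_self _
      _ ≤ ∫ x in Ioo (0:ℝ) L, |((1 - x / L) * φ' x) * ((1 - x / L) ^ 2 * φ'' x)| := by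
          apply setIntegral_mono_set P2.abs
            (Eventually.of_forall fun x => abs_nonneg _)
            (HasSubset.Subset.eventuallyLE hsub)
      _ ≤ B * C := cs2
  -- Step 1: ∫ φ² ≤ 2L·A·B via IBP on [0,b]
  have step1 : A ^ 2 ≤ 2 * L * (A * B) := by
    rw [hA2]
    apply stmt9_lim hL hφL2
    intro b hb
    obtain ⟨hb0, hbL⟩ := hb
    have hsubIoc : Ioc (0:ℝ) b ⊆ Ioo 0 L := fun x hx => ⟨hx.1, lt_of_le_of_lt hx.2 hbL⟩
    have hsubIoo : Ioo (0:ℝ) b ⊆ Ioo 0 L := Ioo_subset_Ioo_right hbL.le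
    have hsubIcc : Icc (0:ℝ) b ⊆ Ico 0 L := fun x hx => ⟨hx.1, lt_of_le_of_lt hx.2 hbL⟩
    set F : ℝ → ℝ := fun x => (L - x) * φ x ^ 2 with hF
    set f : ℝ → ℝ := fun x => -(φ x ^ 2) + 2 * L * (φ x * ((1 - x / L) * φ' x)) with hf
    have hFc : ContinuousOn F (Icc 0 b) :=
      ((continuous_const.sub continuous_id).continuousOn).mul ((hcont.mono hsubIcc).pow 2)
    have hFd : ∀ x ∈ Ioo (0:ℝ) b, HasDerivAt F (f x) x := by
      intro x hx
      have hx' : x ∈ Ioo (0:ℝ) L := hsubIoo hx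
      have h1 : HasDerivAt (fun y : ℝ => L - y) (-1) x := by
        exact (hasDerivAt_id' x).const_sub L
      have h2 : HasDerivAt (fun y => φ y ^ 2) (2 * φ x ^ 1 * φ' x) x :=
        (hderiv x hx').pow 2
      have : HasDerivAt F (-1 * φ x ^ 2 + (L - x) * (2 * φ x ^ 1 * φ' x)) x := h1.mul h2
      convert this using 1
      simp only [hf]
      field_simp
    have hfi : IntegrableOn f (Ioc 0 b) := by
      apply Integrable.add
      · exact (hφL2.mono_set hsubIoc).neg
      · exact (P1.mono_set hsubIoc).const_mul (2 * L)
    have hFTC := stmt9_ftc hb0.le hFc hFd hfi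
    have hF0 : F 0 = 0 := by simp [hF, h0]
    have hFb : 0 ≤ F b := mul_nonneg (by linarith) (sq_nonneg _)
    have hsplit : ∫ x in Ioo (0:ℝ) b, f x =
        -(∫ x in Ioo (0:ℝ) b, φ x ^ 2) +
        2 * L * ∫ x in Ioo (0:ℝ) b, φ x * ((1 - x / L) * φ' x) := by
      have i1 : IntegrableOn (fun x => -(φ x ^ 2)) (Ioo 0 b) volume :=
        (hφL2.mono_set hsubIoo).neg
      have i2 : IntegrableOn (fun x => 2 * L * (φ x * ((1 - x / L) * φ' x))) (Ioo 0 b) volume :=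
        (P1.mono_set hsubIoo).const_mul (2 * L)
      rw [hf]
      rw [integral_add i1 i2, integral_neg, integral_const_mul]
    have hprod := habs1 b ⟨hb0, hbL⟩
    have h2L : (0:ℝ) ≤ 2 * L := by linarith
    nlinarith [mul_le_mul_of_nonneg_left hprod h2L]
  -- Step 2: B² ≤ (2L/3)·B·C via IBP on [0,b]
  have step2 : B ^ 2 ≤ 2 * L / 3 * (B * C) := by
    rw [hB2]
    apply stmt9_lim hL hd1L2
    intro b hb
    obtain ⟨hb0, hbL⟩ := hb
    have hsubIoc : Ioc (0:ℝ) b ⊆ Ioo 0 L := fun x hx => ⟨hx.1, lt_of_le_of_lt hx.2 hbL⟩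
    have hsubIoo : Ioo (0:ℝ) b ⊆ Ioo 0 L := Ioo_subset_Ioo_right hbL.le
    have hsubIcc : Icc (0:ℝ) b ⊆ Ico 0 L := fun x hx => ⟨hx.1, lt_of_le_of_lt hx.2 hbL⟩
    set G : ℝ → ℝ := fun x => (L - x) ^ 3 / (3 * L ^ 2) * φ' x ^ 2 with hG
    set g : ℝ → ℝ := fun x => -(((1 - x / L) * φ' x) ^ 2) +
        2 * L / 3 * (((1 - x / L) * φ' x) * ((1 - x / L) ^ 2 * φ'' x)) with hg
    have hGc : ContinuousOn G (Icc 0 b) :=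
      (((continuous_const.sub continuous_id).pow 3).div_const _).continuousOn.mul
        ((hcont'.mono hsubIcc).pow 2)
    have hGd : ∀ x ∈ Ioo (0:ℝ) b, HasDerivAt G (g x) x := by
      intro x hx
      have hx' : x ∈ Ioo (0:ℝ) L := hsubIoo hx
      have h1 : HasDerivAt (fun y : ℝ => (L - y) ^ 3 / (3 * L ^ 2))
          (3 * (L - x) ^ 2 * (-1) / (3 * L ^ 2)) x := by
        have hb1 : HasDerivAt (fun y : ℝ => L - y) (-1) x := by
          exact (hasDerivAt_id' x).const_sub L
        simpa using (hb1.pow 3).div_const (3 * L ^ 2)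
      have h2 : HasDerivAt (fun y => φ' y ^ 2) (2 * φ' x ^ 1 * φ'' x) x :=
        (hderiv' x hx').pow 2
      have : HasDerivAt G (3 * (L - x) ^ 2 * (-1) / (3 * L ^ 2) * φ' x ^ 2 +
          (L - x) ^ 3 / (3 * L ^ 2) * (2 * φ' x ^ 1 * φ'' x)) x := h1.mul h2
      convert this using 1
      simp only [hg]
      field_simp
    have hgi : IntegrableOn g (Ioc 0 b) := by
      apply Integrable.add
      · exact (hd1L2.mono_set hsubIoc).neg
      · exact (P2.mono_set hsubIoc).const_mul (2 * L / 3)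
    have hFTC := stmt9_ftc hb0.le hGc hGd hgi
    have hG0 : G 0 = 0 := by simp [hG, h0']
    have hGb : 0 ≤ G b := by
      apply mul_nonneg _ (sq_nonneg _)
      apply div_nonneg (pow_nonneg (by linarith) 3) (by positivity)
    have hsplit : ∫ x in Ioo (0:ℝ) b, g x =
        -(∫ x in Ioo (0:ℝ) b, ((1 - x / L) * φ' x) ^ 2) +
        2 * L / 3 * ∫ x in Ioo (0:ℝ) b, ((1 - x / L) * φ' x) * ((1 - x / L) ^ 2 * φ'' x) := by
      have i1 : IntegrableOn (fun x => -(((1 - x / L) * φ' x) ^ 2)) (Ioo 0 b) volume :=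
        (hd1L2.mono_set hsubIoo).neg
      have i2 : IntegrableOn
          (fun x => 2 * L / 3 * (((1 - x / L) * φ' x) * ((1 - x / L) ^ 2 * φ'' x)))
          (Ioo 0 b) volume := (P2.mono_set hsubIoo).const_mul (2 * L / 3)
      rw [hg]
      rw [integral_add i1 i2, integral_neg, integral_const_mul]
    have hprod := habs2 b ⟨hb0, hbL⟩
    have h2L3 : (0:ℝ) ≤ 2 * L / 3 := by linarith
    nlinarith [mul_le_mul_of_nonneg_left hprod h2L3]
  -- conclude
  have hBC : B ≤ 2 * L / 3 * C := by
    rcases eq_or_lt_of_le hB0 with h | h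
    · rw [← h]; positivity
    · nlinarith
  have hAB : A ≤ 2 * L * B := by
    rcases eq_or_lt_of_le hA0 with h | h
    · rw [← h]; positivity
    · nlinarith
  calc A ≤ 2 * L * B := hAB
    _ ≤ 2 * L * (2 * L / 3 * C) := by
        apply mul_le_mul_of_nonneg_left hBC (by linarith)
    _ = 4 * L ^ 2 / 3 * C := by ring
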